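/- Let G be a finite simple graph whose vertex set can be partitioned into two sets A and B such that the subgraph of G induced by A is a comparability graph and B is an independent set in G. Then G is permutationally 1-11-representable. -/

import Mathlib

set_option linter.unusedSectionVars false
set_option linter.unreachableTactic false
set_option linter.unusedTactic false
set_option maxHeartbeats 1000000


/-- The subsequence of `w` consisting of all occurrences of `x` and `y`. -/
def restrictWord {V : Type*} [DecidableEq V] (w : List V) (x y : V) : List V :=
  w.filter (fun z => decide (z = x ∨ z = y))

/-- The number of occurrences of the consecutive pattern 11 in a word:
the number of indices `i` such that the `i`-th and `(i+1)`-th letters are equal. -/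
def pattern11Count {V : Type*} [DecidableEq V] (l : List V) : ℕ :=
  ((l.zip l.tail).filter (fun p => decide (p.1 = p.2))).length

/-- A word `w` over `V` `k`-11-represents the simple graph `G` if every vertex occurs in `w`
and, for all distinct `x y`, `xy` is an edge iff `w|_{x,y}` has at most `k` occurrences of
the pattern 11. -/
def Represents {V : Type*} [DecidableEq V] (k : ℕ) (w : List V) (G : SimpleGraph V) : Prop :=
  (∀ v : V, v ∈ w) ∧
  ∀ x y : V, x ≠ y → (G.Adj x y ↔ pattern11Count (restrictWord w x y) ≤ k)

/-- A graph is `k`-11-representable if some word `k`-11-represents it. -/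
def Representable {V : Type*} [DecidableEq V] (k : ℕ) (G : SimpleGraph V) : Prop :=
  ∃ w : List V, Represents k w G

/-- A word that is a permutation of the vertex set: each vertex occurs exactly once. -/
def IsPermWord {V : Type*} (p : List V) : Prop :=
  p.Nodup ∧ ∀ v : V, v ∈ p

/-- A graph is permutationally `k`-11-representable if some concatenation of permutations
of the vertex set `k`-11-represents it. -/
def PermRepresentable {V : Type*} [DecidableEq V] (k : ℕ) (G : SimpleGraph V) : Prop :=
  ∃ ps : List (List V), (∀ p ∈ ps, IsPermWord p) ∧ Represents k ps.flatten G


section Stmt6Aux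
namespace Stmt6
open scoped List
variable {V : Type*} [DecidableEq V]

theorem restrict_append (w₁ w₂ : List V) (x y : V) :
    restrictWord (w₁ ++ w₂) x y = restrictWord w₁ x y ++ restrictWord w₂ x y :=
  List.filter_append _ _

theorem restrict_comm (w : List V) (x y : V) :
    restrictWord w x y = restrictWord w y x := by
  unfold restrictWord
  apply List.filter_congr
  intro z _
  rw [decide_eq_decide]
  exact or_comm

theorem mem_restrict {w : List V} {x y z : V} :
    z ∈ restrictWord w x y ↔ z ∈ w ∧ (z = x ∨ z = y) := by
  simp [restrictWord]

theorem restrict_eq_nil {w : List V} {x y : V} (h : ∀ z ∈ w, z ≠ x ∧ z ≠ y) :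
    restrictWord w x y = [] := by
  apply List.filter_eq_nil_iff.2
  intro z hz
  simp only [decide_eq_true_eq]
  rcases h z hz with ⟨h1, h2⟩
  rintro (rfl | rfl) <;> simp_all

theorem restrict_sublist (w : List V) (x y : V) : (restrictWord w x y).Sublist w :=
  List.filter_sublist

theorem eq_single_of_forall {l : List V} {x : V} (nd : l.Nodup) (h : ∀ z ∈ l, z = x)
    (hx : x ∈ l) : l = [x] := by
  cases l with
  | nil => simp at hx
  | cons c t =>
    obtain rfl : c = x := h c (by simp)
    cases t with
    | nil => rfl
    | cons d t' =>
      obtain rfl : d = c := h d (by simp)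
      simp at nd

theorem eq_pair_of_forall {l : List V} {x y : V} (nd : l.Nodup) (hx : x ∈ l) (hy : y ∈ l)
    (h : ∀ z ∈ l, z = x ∨ z = y) (hxy : x ≠ y) : l = [x, y] ∨ l = [y, x] := by
  cases l with
  | nil => simp at hx
  | cons c t =>
    have nd' : t.Nodup := nd.of_cons
    rcases h c (by simp) with rfl | rfl
    · left
      have hyt : y ∈ t := by
        rcases List.mem_cons.1 hy with hh | hh
        · exact absurd hh.symm hxy
        · exact hh
      have : t = [y] := by
        apply eq_single_of_forall nd' _ hyt
        intro z hz
        rcases h z (by simp [hz]) with rfl | rfl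
        · exact absurd (List.nodup_cons.1 nd).1 (by simp [hz])
        · rfl
      rw [this]
    · right
      have hxt : x ∈ t := by
        rcases List.mem_cons.1 hx with hh | hh
        · exact absurd hh hxy
        · exact hh
      have : t = [x] := by
        apply eq_single_of_forall nd' _ hxt
        intro z hz
        rcases h z (by simp [hz]) with rfl | rfl
        · rfl
        · exact absurd (List.nodup_cons.1 nd).1 (by simp [hz])
      rw [this]

theorem restrict_nodup {w : List V} (nd : w.Nodup) (x y : V) : (restrictWord w x y).Nodup :=
  nd.sublist (restrict_sublist w x y)

theorem restrict_single {w : List V} {x y : V} (nd : w.Nodup) (hx : x ∈ w) (hy : y ∉ w) :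
    restrictWord w x y = [x] := by
  apply eq_single_of_forall (restrict_nodup nd x y)
  · intro z hz
    rcases mem_restrict.1 hz with ⟨hzw, rfl | rfl⟩
    · rfl
    · exact absurd hzw hy
  · exact mem_restrict.2 ⟨hx, Or.inl rfl⟩

theorem restrict_pair {w : List V} {x y : V} (nd : w.Nodup) (hx : x ∈ w) (hy : y ∈ w)
    (hxy : x ≠ y) : restrictWord w x y = [x, y] ∨ restrictWord w x y = [y, x] := by
  apply eq_pair_of_forall (restrict_nodup nd x y) _ _ _ hxy
  · exact mem_restrict.2 ⟨hx, Or.inl rfl⟩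
  · exact mem_restrict.2 ⟨hy, Or.inr rfl⟩
  · intro z hz
    exact (mem_restrict.1 hz).2

theorem restrict_sorted {s : V → V → Prop} {w : List V} {x y : V}
    (hanti : ∀ a b, s a b → s b a → a = b) (hpw : w.Pairwise s) (nd : w.Nodup)
    (hx : x ∈ w) (hy : y ∈ w) (hxy : x ≠ y) (hs : s x y) :
    restrictWord w x y = [x, y] := by
  rcases restrict_pair nd hx hy hxy with h | h
  · exact h
  · exfalso
    have : (restrictWord w x y).Pairwise s := hpw.sublist (restrict_sublist w x y)
    rw [h] at this
    have hyx : s y x := by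
      rcases List.pairwise_cons.1 this with ⟨h1, _⟩
      exact h1 x (by simp)
    exact hxy (hanti x y hs hyx)

theorem restrict_erase_of_ne {w : List V} {x y b : V} (hbx : b ≠ x) (hby : b ≠ y) :
    restrictWord (w.erase b) x y = restrictWord w x y := by
  by_cases hb : b ∈ w
  · obtain ⟨l₁, l₂, -, h1, h2⟩ := List.exists_erase_eq hb
    rw [h2, restrict_append]
    conv_rhs => rw [h1, restrict_append]
    congr 1
    have : restrictWord (b :: l₂) x y = restrictWord l₂ x y := by
      unfold restrictWord
      rw [List.filter_cons_of_neg]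
      simp [hbx, hby]
    rw [this]
  · rw [List.erase_of_not_mem hb]


def flips : List Bool → ℕ
  | [] => 0
  | [_] => 0
  | a :: b :: t => (if a = b then 0 else 1) + flips (b :: t)

theorem p11_nil : pattern11Count ([] : List V) = 0 := rfl

theorem p11_single (a : V) : pattern11Count [a] = 0 := rfl

theorem p11_cons_cons (a b : V) (l : List V) :
    pattern11Count (a :: b :: l) = (if a = b then 1 else 0) + pattern11Count (b :: l) := by
  unfold pattern11Count
  simp only [List.tail_cons, List.zip_cons_cons, List.filter_cons]
  by_cases h : a = b
  · simp [h]
    try omega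
  · simp [h]

theorem flips_cons_head (c : Bool) (l : List Bool) :
    flips (c :: l) = (match l.head? with
      | none => 0
      | some d => if c = d then 0 else 1) + flips l := by
  cases l with
  | nil => rfl
  | cons d t => rfl

theorem flips_const {l : List Bool} {v : Bool} (h : ∀ b ∈ l, b = v) : flips l = 0 := by
  induction l with
  | nil => rfl
  | cons c t ih =>
    rw [flips_cons_head]
    have hc : c = v := h c (by simp)
    have ht : ∀ b ∈ t, b = v := fun b hb => h b (by simp [hb])
    rw [ih ht]
    cases t with
    | nil => rfl
    | cons d t' =>
      have hd : d = v := ht d (by simp)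
      simp [hc, hd]

theorem flips_cons_le (c : Bool) (l : List Bool) : flips l ≤ flips (c :: l) := by
  rw [flips_cons_head]; omega

theorem flips_append_right_ge (u l : List Bool) : flips l ≤ flips (u ++ l) := by
  induction u with
  | nil => simp
  | cons c u' ih => exact le_trans ih (flips_cons_le c (u' ++ l))

theorem flips_concat (l : List Bool) (a : Bool) :
    flips (l ++ [a]) = flips l + (match l.getLast? with
      | none => 0
      | some b => if b = a then 0 else 1) := by
  induction l with
  | nil => rfl
  | cons c t ih =>
    cases t with
    | nil => simp [flips]
    | cons d t' =>
      rw [show (c :: d :: t') ++ [a] = c :: d :: (t' ++ [a]) by simp]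
      have h1 : flips (c :: d :: (t' ++ [a])) = (if c = d then 0 else 1) + flips (d :: (t' ++ [a])) := rfl
      rw [h1]
      have h2 : (d :: (t' ++ [a])) = (d :: t') ++ [a] := by simp
      rw [h2, ih]
      have h3 : flips (c :: d :: t') = (if c = d then 0 else 1) + flips (d :: t') := rfl
      rw [h3]
      have h4 : (c :: d :: t').getLast? = (d :: t').getLast? := by
        rw [List.getLast?_cons_cons]
      rw [h4]
      omega

theorem flips_const_prepend {u w : List Bool} {v : Bool} (hu : ∀ b ∈ u, b = v)
    (hw : w.head? = some v) : flips (u ++ w) = flips w := by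
  induction u with
  | nil => rfl
  | cons c u' ih =>
    have hc : c = v := hu c (by simp)
    have ih' := ih (fun b hb => hu b (by simp [hb]))
    rw [List.cons_append, flips_cons_head, ih']
    cases u' with
    | nil =>
      simp only [List.nil_append]
      rw [hw]
      simp [hc]
    | cons d u'' =>
      have hd : d = v := hu d (by simp)
      simp [hc, hd]

theorem flips_append_const_right {u w : List Bool} {v : Bool} (hu : ∀ b ∈ u, b = v)
    (hw : w.getLast? = some v) : flips (w ++ u) = flips w := by
  induction u generalizing w with
  | nil => simp
  | cons c u' ih =>
    have hc : c = v := hu c (by simp)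
    have : w ++ c :: u' = (w ++ [c]) ++ u' := by simp
    rw [this, ih (fun b hb => hu b (by simp [hb]))]
    · rw [flips_concat, hw]
      simp [hc]
    · rw [List.getLast?_append]
      simp [hc]

theorem flips_ge_two {u w : List Bool} {c d : Bool} (h : u.getLast? = some c) (hcd : d ≠ c) :
    2 ≤ flips (u ++ d :: c :: w) := by
  induction u with
  | nil => simp at h
  | cons a u' ih =>
    cases u' with
    | nil =>
      have hac : a = c := by simpa using h
      subst hac
      have h1 : flips (a :: d :: a :: w) = (if a = d then 0 else 1) + flips (d :: a :: w) := rfl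
      have h2 : flips (d :: a :: w) = (if d = a then 0 else 1) + flips (a :: w) := rfl
      rw [List.singleton_append, h1, h2]
      have had : ¬ (a = d) := fun hh => hcd hh.symm
      simp only [had, hcd, if_false]
      omega
    | cons b u'' =>
      rw [List.getLast?_cons_cons] at h
      refine le_trans (ih h) ?_
      exact flips_cons_le _ _
  
theorem flips_const_head {u w : List Bool} {c : Bool} (hu : ∀ b ∈ u, b = c) (hne : u ≠ []) :
    flips (u ++ w) = flips (c :: w) := by
  induction u with
  | nil => simp at hne
  | cons a u' ih =>
    have ha : a = c := hu a (by simp)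
    subst ha
    cases u' with
    | nil => rfl
    | cons b u'' =>
      have hb : b = a := hu b (by simp)
      rw [List.cons_append, flips_cons_head, ih (fun x hx => hu x (by simp [hx])) (by simp)]
      simp [hb]

theorem flips_two_const {u w : List Bool} {c v : Bool} (hu : ∀ b ∈ u, b = c)
    (hw : ∀ b ∈ w, b = v) : flips (u ++ w) ≤ 1 := by
  rcases List.eq_nil_or_concat u with rfl | -
  · simp [flips_const hw]
  · rcases List.eq_nil_or_concat' u with rfl | ⟨u', a, rfl⟩
    · simp [flips_const hw]
    · rw [flips_const_head hu (by simp)]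
      rw [flips_cons_head, flips_const hw]
      cases hh : w.head? with
      | none => simp
      | some d =>
        show (if c = d then 0 else 1) + 0 ≤ 1
        split_ifs <;> omega

theorem p11_blocks {x y : V} (hxy : x ≠ y) (bs : List Bool) :
    pattern11Count ((bs.map (fun b => if b then [x, y] else [y, x])).flatten) = flips bs := by
  induction bs with
  | nil => rfl
  | cons b bs' ih =>
    cases bs' with
    | nil =>
      cases b <;> simp [pattern11Count, flips] <;> simp [hxy, Ne.symm hxy]
    | cons b' t =>
      have hexp : ((b :: b' :: t).map (fun b => if b then [x, y] else [y, x])).flatten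
          = (if b then [x, y] else [y, x]) ++ ((b' :: t).map (fun b => if b then [x, y] else [y, x])).flatten := by
        simp
      rw [hexp]
      have hhead : ∃ r, ((b' :: t).map (fun b => if b then [x, y] else [y, x])).flatten
          = (if b' then x else y) :: r := by
        cases b' <;> simp
      obtain ⟨r, hr⟩ := hhead
      rw [hr]
      rw [hr] at ih
      have hflips : flips (b :: b' :: t) = (if b = b' then 0 else 1) + flips (b' :: t) := rfl
      rw [hflips, ← ih]
      cases b <;> cases b' <;>
        simp [p11_cons_cons, hxy, Ne.symm hxy] <;> omega

def obw (x y : V) (p : List V) : Bool := decide (restrictWord p x y = [x, y])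

theorem restrict_flatten (ps : List (List V)) (x y : V) :
    restrictWord ps.flatten x y = (ps.map (fun p => restrictWord p x y)).flatten := by
  induction ps with
  | nil => rfl
  | cons p ps' ih =>
    rw [List.flatten_cons, restrict_append, List.map_cons, List.flatten_cons, ih]

theorem count_eq_flips {x y : V} (hxy : x ≠ y) (ps : List (List V))
    (h : ∀ p ∈ ps, restrictWord p x y = [x, y] ∨ restrictWord p x y = [y, x]) :
    pattern11Count (restrictWord ps.flatten x y) = flips (ps.map (obw x y)) := by
  rw [restrict_flatten]
  have : ps.map (fun p => restrictWord p x y)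
      = (ps.map (obw x y)).map (fun b => if b then [x, y] else [y, x]) := by
    rw [List.map_map]
    apply List.map_congr_left
    intro p hp
    simp only [Function.comp_apply]
    rcases h p hp with hr | hr
    · simp [obw, hr]
    · have : ¬(restrictWord p x y = [x, y]) := by
        rw [hr]
        intro hcon
        exact Ne.symm hxy (by injection hcon)
      have hob : obw x y p = false := by simp [obw, this]
      rw [hob, hr]
      simp
  rw [this, p11_blocks hxy]



theorem restrict_singleton_mem {z x y : V} (h : z = x ∨ z = y) :
    restrictWord [z] x y = [z] := by
  simp [restrictWord, h]

theorem restrict_singleton_ne {z x y : V} (h1 : z ≠ x) (h2 : z ≠ y) :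
    restrictWord [z] x y = [] := by
  simp [restrictWord, h1, h2]

theorem restrict_sublist_nil {l m : List V} {x y : V} (h : l.Sublist m)
    (hm : restrictWord m x y = []) : restrictWord l x y = [] :=
  List.sublist_nil.1 (hm ▸ h.filter _)

theorem restrict_cons (z : V) (w : List V) (x y : V) :
    restrictWord (z :: w) x y = restrictWord [z] x y ++ restrictWord w x y :=
  restrict_append [z] w x y

theorem restrict_single' {w : List V} {x y : V} (nd : w.Nodup) (hy : y ∈ w) (hx : x ∉ w) :
    restrictWord w x y = [y] := by
  rw [restrict_comm]
  exact restrict_single nd hy hx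

theorem getLast?_cons_flatMap {α β : Type*} (c : α) (g : β → α) (l : List β) :
    (c :: l.flatMap (fun b => [g b, c])).getLast? = some c := by
  induction l with
  | nil => rfl
  | cons b l' ih =>
    have h : c :: (b :: l').flatMap (fun b => [g b, c])
        = c :: g b :: c :: l'.flatMap (fun b => [g b, c]) := by
      simp [List.flatMap_cons]
    rw [h, List.getLast?_cons_cons, List.getLast?_cons_cons]
    exact ih

theorem getLast?_flatMap_ne {α β : Type*} (c : α) (g : β → α) (l : List β) (h : l ≠ []) :
    (l.flatMap (fun b => [g b, c])).getLast? = some c := by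
  cases l with
  | nil => simp at h
  | cons b l' =>
    have h2 : (b :: l').flatMap (fun b => [g b, c])
        = g b :: (c :: l'.flatMap (fun b => [g b, c])) := by
      simp [List.flatMap_cons]
    rw [h2, List.getLast?_cons_cons, getLast?_cons_flatMap]

def basePerm (pre bk : List V) (a : V) (LB : List V) : List V := pre ++ bk ++ a :: LB

def wigPerm (pre bk : List V) (a b : V) (LB : List V) : List V :=
  pre ++ bk ++ b :: a :: LB.erase b

def blockOf (pre bk : List V) (a : V) (LB : List V) (wa : V → Bool) : List (List V) :=
  basePerm pre bk a LB ::
    LB.flatMap (fun b => [if wa b then wigPerm pre bk a b LB else basePerm pre bk a LB,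
      basePerm pre bk a LB])

def blocksAux (LB : List V) (w : V → V → Bool) : List V → List V → List (List V)
  | [], _ => []
  | a :: fr, bk => blockOf fr.reverse bk a LB (w a) ++ blocksAux LB w fr (bk ++ [a])

def ordseq : List V → List V → List (List V)
  | [], _ => []
  | a :: fr, bk => (fr.reverse ++ bk ++ [a]) :: ordseq fr (bk ++ [a])

theorem blocksAux_nil (LB : List V) (w : V → V → Bool) (bk : List V) :
    blocksAux LB w [] bk = [] := rfl

theorem blocksAux_cons (LB : List V) (w : V → V → Bool) (a : V) (fr bk : List V) :
    blocksAux LB w (a :: fr) bk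
      = blockOf fr.reverse bk a LB (w a) ++ blocksAux LB w fr (bk ++ [a]) := rfl

theorem ordseq_nil (bk : List V) : ordseq ([] : List V) bk = [] := rfl

theorem ordseq_cons (a : V) (fr bk : List V) :
    ordseq (a :: fr) bk = (fr.reverse ++ bk ++ [a]) :: ordseq fr (bk ++ [a]) := rfl

theorem mem_blockOf {pre bk : List V} {a : V} {LB : List V} {wa : V → Bool} {p : List V}
    (h : p ∈ blockOf pre bk a LB wa) :
    p = basePerm pre bk a LB ∨ ∃ b ∈ LB, wa b = true ∧ p = wigPerm pre bk a b LB := by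
  rcases List.mem_cons.1 h with h | h
  · exact Or.inl h
  · rcases List.mem_flatMap.1 h with ⟨b, hb, hp⟩
    rcases List.mem_cons.1 hp with h | h
    · by_cases hw : wa b = true
      · exact Or.inr ⟨b, hb, hw, by rwa [if_pos hw] at h⟩
      · left
        rwa [if_neg hw] at h
    · left
      simpa using h

theorem blockOf_getLast (pre bk : List V) (a : V) (LB : List V) (wa : V → Bool) :
    (blockOf pre bk a LB wa).getLast? = some (basePerm pre bk a LB) :=
  getLast?_cons_flatMap _ _ _

theorem blocksAux_getLast (LB : List V) (w : V → V → Bool) :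
    ∀ (fr bk : List V), fr ≠ [] →
      (blocksAux LB w fr bk).getLast? = some (bk ++ fr ++ LB)
  | [], _, h => absurd rfl h
  | [a], bk, _ => by
    rw [blocksAux_cons, blocksAux_nil, List.append_nil, List.reverse_nil, blockOf_getLast]
    simp [basePerm]
  | a :: a₂ :: fr, bk, _ => by
    rw [blocksAux_cons, List.getLast?_append,
      blocksAux_getLast LB w (a₂ :: fr) (bk ++ [a]) (by simp)]
    simp

theorem perm_base (pre bk : List V) (a : V) (LB : List V) :
    (basePerm pre bk a LB).Perm (a :: (pre ++ bk ++ LB)) := by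
  unfold basePerm
  calc pre ++ bk ++ a :: LB
      = pre ++ (bk ++ a :: LB) := by rw [List.append_assoc]
    _ ~ pre ++ (a :: (bk ++ LB)) := List.Perm.append_left pre List.perm_middle
    _ = pre ++ a :: (bk ++ LB) := rfl
    _ ~ a :: (pre ++ (bk ++ LB)) := List.perm_middle
    _ = a :: (pre ++ bk ++ LB) := by rw [List.append_assoc]

theorem perm_wig (pre bk : List V) (a b : V) (LB : List V) (hb : b ∈ LB) :
    (wigPerm pre bk a b LB).Perm (a :: (pre ++ bk ++ LB)) := by
  have h1 : (b :: a :: LB.erase b).Perm (a :: LB) := by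
    calc b :: a :: LB.erase b
        ~ a :: b :: LB.erase b := List.Perm.swap _ _ _
      _ ~ a :: LB := List.Perm.cons a (List.perm_cons_erase hb).symm
  have h2 : (wigPerm pre bk a b LB).Perm (basePerm pre bk a LB) := by
    unfold wigPerm basePerm
    rw [List.append_assoc, List.append_assoc]
    exact List.Perm.append_left pre (List.Perm.append_left bk h1)
  exact h2.trans (perm_base pre bk a LB)

theorem blockOf_mem_perm {pre bk : List V} {a : V} {LB : List V} {wa : V → Bool} {p : List V}
    (h : p ∈ blockOf pre bk a LB wa) : p.Perm (a :: (pre ++ bk ++ LB)) := by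
  rcases mem_blockOf h with rfl | ⟨b, hb, _, rfl⟩
  · exact perm_base pre bk a LB
  · exact perm_wig pre bk a b LB hb

theorem blocksAux_mem_perm (LB : List V) (w : V → V → Bool) :
    ∀ (fr bk : List V) (p : List V), p ∈ blocksAux LB w fr bk → p.Perm (fr ++ bk ++ LB)
  | [], _, p, h => by simp [blocksAux_nil] at h
  | a :: fr, bk, p, h => by
    rw [blocksAux_cons] at h
    rcases List.mem_append.1 h with h | h
    · refine (blockOf_mem_perm h).trans ?_
      refine List.Perm.cons a ?_
      exact (fr.reverse_perm.append_right _).append_right _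
    · refine (blocksAux_mem_perm LB w fr (bk ++ [a]) p h).trans ?_
      calc fr ++ (bk ++ [a]) ++ LB
          = fr ++ ((bk ++ [a]) ++ LB) := by rw [List.append_assoc]
        _ = fr ++ (bk ++ a :: LB) := by simp
        _ = basePerm fr bk a LB := by simp [basePerm]
        _ ~ a :: (fr ++ bk ++ LB) := perm_base fr bk a LB
        _ = (a :: fr) ++ bk ++ LB := by simp

theorem blockOf_decomp {LB : List V} {b : V} (pre bk : List V) (a : V) (wa : V → Bool)
    (hb : b ∈ LB) (hw : wa b = true) :
    ∃ X Y, blockOf pre bk a LB wa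
        = X ++ [wigPerm pre bk a b LB, basePerm pre bk a LB] ++ Y ∧
      X.getLast? = some (basePerm pre bk a LB) := by
  obtain ⟨m₁, m₂, rfl⟩ := List.append_of_mem hb
  refine ⟨basePerm pre bk a (m₁ ++ b :: m₂) ::
      m₁.flatMap (fun b' => [if wa b' then wigPerm pre bk a b' (m₁ ++ b :: m₂)
        else basePerm pre bk a (m₁ ++ b :: m₂), basePerm pre bk a (m₁ ++ b :: m₂)]),
    m₂.flatMap (fun b' => [if wa b' then wigPerm pre bk a b' (m₁ ++ b :: m₂)
        else basePerm pre bk a (m₁ ++ b :: m₂), basePerm pre bk a (m₁ ++ b :: m₂)]),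
    ?_, getLast?_cons_flatMap _ _ _⟩
  conv_lhs => rw [blockOf, List.flatMap_append, List.flatMap_cons]
  rw [if_pos hw]
  simp

theorem blocksAux_decomp (LB : List V) (w : V → V → Bool) :
    ∀ (fr bk : List V) (a : V), a ∈ fr → (fr ++ bk).Nodup →
      ∃ pre bk' X Y, blocksAux LB w fr bk = X ++ blockOf pre bk' a LB (w a) ++ Y ∧
        (∀ z ∈ pre ++ bk', z ∈ fr ++ bk ∧ z ≠ a)
  | [], _, a, ha, _ => absurd ha (by simp)
  | a₀ :: fr, bk, a, ha, nd => by
    rw [List.cons_append, List.nodup_cons] at nd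
    obtain ⟨hna, nd0⟩ := nd
    rcases List.mem_cons.1 ha with rfl | ha'
    · refine ⟨fr.reverse, bk, [], blocksAux LB w fr (bk ++ [a]), by
        rw [blocksAux_cons]; simp, ?_⟩
      intro z hz
      rcases List.mem_append.1 hz with hz | hz
      · have hzf : z ∈ fr := by simpa using hz
        refine ⟨by simp [hzf], ?_⟩
        rintro rfl
        exact hna (List.mem_append.2 (Or.inl hzf))
      · refine ⟨by simp [hz], ?_⟩
        rintro rfl
        exact hna (List.mem_append.2 (Or.inr hz))
    · have nd' : (fr ++ (bk ++ [a₀])).Nodup := by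
        have h1 : (a₀ :: (fr ++ bk)).Perm (fr ++ (bk ++ [a₀])) := by
          calc a₀ :: (fr ++ bk)
              ~ fr ++ (a₀ :: bk) := List.perm_middle.symm
            _ ~ fr ++ (bk ++ [a₀]) :=
                List.Perm.append_left fr (List.perm_append_singleton a₀ bk).symm
        exact h1.nodup (List.nodup_cons.2 ⟨hna, nd0⟩)
      obtain ⟨pre, bk', X, Y, heq, hmem⟩ := blocksAux_decomp LB w fr (bk ++ [a₀]) a ha' nd'
      refine ⟨pre, bk', blockOf fr.reverse bk a₀ LB (w a₀) ++ X, Y, by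
        rw [blocksAux_cons, heq]
        try simp only [List.append_assoc]
        try rfl, ?_⟩
      intro z hz
      obtain ⟨h1, h2⟩ := hmem z hz
      refine ⟨?_, h2⟩
      rcases List.mem_append.1 h1 with h | h
      · simp [h]
      · rcases List.mem_append.1 h with h | h
        · simp [h]
        · have : z = a₀ := by simpa using h
          simp [this]

theorem basePerm_restrict {pre bk : List V} {a : V} {LB : List V} {x y : V}
    (hx : x ∉ LB) (hy : y ∉ LB) :
    restrictWord (basePerm pre bk a LB) x y = restrictWord (pre ++ bk ++ [a]) x y := by
  have hLB : restrictWord LB x y = [] := by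
    apply restrict_eq_nil
    intro z hz
    constructor <;> rintro rfl <;> [exact hx hz; exact hy hz]
  unfold basePerm
  rw [restrict_append, restrict_append, restrict_cons, hLB, List.append_nil,
    restrict_append, restrict_append]

theorem wigPerm_restrict {pre bk : List V} {a b : V} {LB : List V} {x y : V}
    (hx : x ∉ LB) (hy : y ∉ LB) (hb : b ∈ LB) :
    restrictWord (wigPerm pre bk a b LB) x y = restrictWord (pre ++ bk ++ [a]) x y := by
  have hLB : restrictWord LB x y = [] := by
    apply restrict_eq_nil
    intro z hz
    constructor <;> rintro rfl <;> [exact hx hz; exact hy hz]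
  have hb' : restrictWord [b] x y = [] := by
    apply restrict_singleton_ne <;> rintro rfl <;> [exact hx hb; exact hy hb]
  have her : restrictWord (LB.erase b) x y = [] :=
    restrict_sublist_nil (List.erase_sublist (a := b) (l := LB)) hLB
  unfold wigPerm
  rw [restrict_append, restrict_append, restrict_cons b (a :: LB.erase b) x y, hb',
    restrict_cons a (LB.erase b) x y, her, restrict_append, restrict_append]
  simp

theorem blockOf_restrict {pre bk : List V} {a : V} {LB : List V} {wa : V → Bool} {x y : V}
    (hx : x ∉ LB) (hy : y ∉ LB) {p : List V} (hp : p ∈ blockOf pre bk a LB wa) :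
    restrictWord p x y = restrictWord (pre ++ bk ++ [a]) x y := by
  rcases mem_blockOf hp with rfl | ⟨b, hb, _, rfl⟩
  · exact basePerm_restrict hx hy
  · exact wigPerm_restrict hx hy hb

theorem flips_blocksAux_eq {LB : List V} {w : V → V → Bool} {x y : V}
    (hx : x ∉ LB) (hy : y ∉ LB) :
    ∀ (fr bk : List V),
      flips ((blocksAux LB w fr bk).map (obw x y)) = flips ((ordseq fr bk).map (obw x y))
  | [], _ => rfl
  | a :: fr, bk => by
    rw [blocksAux_cons, ordseq_cons, List.map_append, List.map_cons]
    have hconst : ∀ q ∈ (blockOf fr.reverse bk a LB (w a)).map (obw x y),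
        q = obw x y (fr.reverse ++ bk ++ [a]) := by
      intro q hq
      rcases List.mem_map.1 hq with ⟨p, hp, rfl⟩
      simp only [obw]
      rw [blockOf_restrict hx hy hp]
    rw [flips_const_head hconst (by simp [blockOf])]
    rw [flips_cons_head, flips_cons_head]
    rw [flips_blocksAux_eq hx hy fr (bk ++ [a])]
    congr 1
    cases fr with
    | nil => rfl
    | cons a₂ fr' =>
      rw [blocksAux_cons, ordseq_cons]
      have h1 : ((blockOf fr'.reverse (bk ++ [a]) a₂ LB (w a₂)
          ++ blocksAux LB w fr' (bk ++ [a] ++ [a₂])).map (obw x y)).head?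
          = some (obw x y (basePerm fr'.reverse (bk ++ [a]) a₂ LB)) := by
        rw [List.map_append]
        unfold blockOf
        simp
      rw [h1]
      have h2 : (((fr'.reverse ++ (bk ++ [a]) ++ [a₂]) :: ordseq fr' (bk ++ [a] ++ [a₂])).map
          (obw x y)).head? = some (obw x y (fr'.reverse ++ (bk ++ [a]) ++ [a₂])) := by
        simp
      rw [h2]
      have h3 : obw x y (basePerm fr'.reverse (bk ++ [a]) a₂ LB)
          = obw x y (fr'.reverse ++ (bk ++ [a]) ++ [a₂]) := by
        simp only [obw]
        rw [basePerm_restrict hx hy]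
      rw [h3]

theorem restrict_nil (x y : V) : restrictWord [] x y = [] := rfl

theorem restrict_cons' (z : V) (w : List V) (x y : V) :
    restrictWord (z :: w) x y = (if z = x ∨ z = y then [z] else []) ++ restrictWord w x y := by
  by_cases h : z = x ∨ z = y
  · rw [if_pos h, restrict_cons, restrict_singleton_mem h]
  · push_neg at h
    rw [if_neg (by tauto), restrict_cons, restrict_singleton_ne h.1 h.2, List.nil_append]

theorem ordseq_boundary {x y : V} (hxy : x ≠ y) (a a₂ : V) (fr bk : List V)
    (nd : (a :: a₂ :: (fr ++ bk)).Nodup)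
    (hx : x ∈ a :: a₂ :: (fr ++ bk)) (hy : y ∈ a :: a₂ :: (fr ++ bk)) :
    restrictWord (fr.reverse ++ (bk ++ [a]) ++ [a₂]) x y
      = restrictWord ((a₂ :: fr).reverse ++ bk ++ [a]) x y ∨
    restrictWord (fr.reverse ++ (bk ++ [a]) ++ [a₂]) x y
      = restrictWord (bk ++ a :: a₂ :: fr) x y := by
  obtain ⟨ha, nd2⟩ := List.nodup_cons.1 nd
  obtain ⟨ha2, nd3⟩ := List.nodup_cons.1 nd2
  have haa2 : a ≠ a₂ := fun h => ha (by simp [h])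
  have hafr : a ∉ fr := fun h => ha (by simp [h])
  have habk : a ∉ bk := fun h => ha (by simp [h])
  have ha2fr : a₂ ∉ fr := fun h => ha2 (by simp [h])
  have ha2bk : a₂ ∉ bk := fun h => ha2 (by simp [h])
  have ndfr : fr.Nodup := (List.nodup_append.1 nd3).1
  have ndbk : bk.Nodup := (List.nodup_append.1 nd3).2.1
  have hdisj : ∀ z ∈ fr, z ∉ bk := fun z hz hz' => (List.nodup_append.1 nd3).2.2 z hz z hz' rfl
  by_cases h2x : a₂ = x
  · subst h2x
    rcases List.mem_cons.1 hy with h | hy2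
    · -- y = a
      subst h
      have hfr : restrictWord fr a₂ y = [] := restrict_eq_nil (by
        intro z hz
        exact ⟨fun h => ha2fr (h ▸ hz), fun h => hafr (h ▸ hz)⟩)
      have hfrr : restrictWord fr.reverse a₂ y = [] := restrict_eq_nil (by
        intro z hz
        have hz' : z ∈ fr := by simpa using hz
        exact ⟨fun h => ha2fr (h ▸ hz'), fun h => hafr (h ▸ hz')⟩)
      have hbk : restrictWord bk a₂ y = [] := restrict_eq_nil (by
        intro z hz
        exact ⟨fun h => ha2bk (h ▸ hz), fun h => habk (h ▸ hz)⟩)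
      right
      simp [restrict_nil, restrict_cons', restrict_append, hfr, hfrr, hbk]
    · rcases List.mem_cons.1 hy2 with h | hy3
      · exact absurd h.symm hxy
      · rcases List.mem_append.1 hy3 with hyfr | hybk
        · left
          have hya : y ≠ a := fun h => hafr (h ▸ hyfr)
          have hfrr : restrictWord fr.reverse a₂ y = [y] :=
            restrict_single' (List.nodup_reverse.2 ndfr) (by simpa using hyfr) (by simpa using ha2fr)
          have hbk : restrictWord bk a₂ y = [] := restrict_eq_nil (by
            intro z hz
            exact ⟨fun h => ha2bk (h ▸ hz), fun h => hdisj z (h ▸ hyfr) hz⟩)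
          simp [restrict_nil, restrict_cons', restrict_append, hfrr, hbk, haa2, Ne.symm hya]
        · right
          have hya : y ≠ a := fun h => habk (h ▸ hybk)
          have hfr : restrictWord fr a₂ y = [] := restrict_eq_nil (by
            intro z hz
            exact ⟨fun h => ha2fr (h ▸ hz), fun h => hdisj z hz (h ▸ hybk)⟩)
          have hfrr : restrictWord fr.reverse a₂ y = [] := restrict_eq_nil (by
            intro z hz
            have hz' : z ∈ fr := by simpa using hz
            exact ⟨fun h => ha2fr (h ▸ hz'), fun h => hdisj z hz' (h ▸ hybk)⟩)
          have hbk : restrictWord bk a₂ y = [y] :=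
            restrict_single' ndbk hybk ha2bk
          simp [restrict_nil, restrict_cons', restrict_append, hfr, hfrr, hbk, haa2, Ne.symm hya]
  · by_cases h2y : a₂ = y
    · subst h2y
      rcases List.mem_cons.1 hx with h | hx2
      · subst h
        have hfr : restrictWord fr x a₂ = [] := restrict_eq_nil (by
          intro z hz
          exact ⟨fun h => hafr (h ▸ hz), fun h => ha2fr (h ▸ hz)⟩)
        have hfrr : restrictWord fr.reverse x a₂ = [] := restrict_eq_nil (by
          intro z hz
          have hz' : z ∈ fr := by simpa using hz
          exact ⟨fun h => hafr (h ▸ hz'), fun h => ha2fr (h ▸ hz')⟩)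
        have hbk : restrictWord bk x a₂ = [] := restrict_eq_nil (by
          intro z hz
          exact ⟨fun h => habk (h ▸ hz), fun h => ha2bk (h ▸ hz)⟩)
        right
        simp [restrict_nil, restrict_cons', restrict_append, hfr, hfrr, hbk]
      · rcases List.mem_cons.1 hx2 with h | hx3
        · exact absurd h hxy
        · rcases List.mem_append.1 hx3 with hxfr | hxbk
          · left
            have hxa : x ≠ a := fun h => hafr (h ▸ hxfr)
            have hfrr : restrictWord fr.reverse x a₂ = [x] :=
              restrict_single (List.nodup_reverse.2 ndfr) (by simpa using hxfr) (by simpa using ha2fr)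
            have hbk : restrictWord bk x a₂ = [] := restrict_eq_nil (by
              intro z hz
              exact ⟨fun h => hdisj z (h ▸ hxfr) hz, fun h => ha2bk (h ▸ hz)⟩)
            simp [restrict_nil, restrict_cons', restrict_append, hfrr, hbk, haa2, Ne.symm hxa]
          · right
            have hxa : x ≠ a := fun h => habk (h ▸ hxbk)
            have hfr : restrictWord fr x a₂ = [] := restrict_eq_nil (by
              intro z hz
              exact ⟨fun h => hdisj z hz (h ▸ hxbk), fun h => ha2fr (h ▸ hz)⟩)
            have hfrr : restrictWord fr.reverse x a₂ = [] := restrict_eq_nil (by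
              intro z hz
              have hz' : z ∈ fr := by simpa using hz
              exact ⟨fun h => hdisj z hz' (h ▸ hxbk), fun h => ha2fr (h ▸ hz')⟩)
            have hbk : restrictWord bk x a₂ = [x] :=
              restrict_single ndbk hxbk ha2bk
            simp [restrict_nil, restrict_cons', restrict_append, hfr, hfrr, hbk, haa2, Ne.symm hxa]
    · left
      simp [restrict_nil, restrict_cons', restrict_append, h2x, h2y]

theorem ordseq_good {x y : V} (hxy : x ≠ y) :
    ∀ (fr bk : List V), (fr ++ bk).Nodup → x ∈ fr ++ bk → y ∈ fr ++ bk →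
      ∃ (k k' : ℕ) (c : Bool), (ordseq fr bk).map (obw x y)
        = List.replicate k c ++ List.replicate k' (obw x y (bk ++ fr))
  | [], bk, _, _, _ => ⟨0, 0, true, rfl⟩
  | a :: fr, bk, nd, hx, hy => by
    have ndperm : ((a :: fr) ++ bk).Perm (fr ++ (bk ++ [a])) := by
      calc (a :: fr) ++ bk = a :: (fr ++ bk) := rfl
        _ ~ fr ++ (a :: bk) := List.perm_middle.symm
        _ ~ fr ++ (bk ++ [a]) := List.Perm.append_left fr (List.perm_append_singleton a bk).symm
    have nd' : (fr ++ (bk ++ [a])).Nodup := ndperm.nodup nd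
    have hx' : x ∈ fr ++ (bk ++ [a]) := ndperm.mem_iff.1 hx
    have hy' : y ∈ fr ++ (bk ++ [a]) := ndperm.mem_iff.1 hy
    obtain ⟨k, k', c, hrest⟩ := ordseq_good hxy fr (bk ++ [a]) nd' hx' hy'
    have hvfix : obw x y ((bk ++ [a]) ++ fr) = obw x y (bk ++ a :: fr) := by
      rw [List.append_assoc, List.singleton_append]
    rw [hvfix] at hrest
    set v := obw x y (bk ++ a :: fr) with hv
    rw [ordseq_cons, List.map_cons, hrest]
    set c₀ := obw x y (fr.reverse ++ bk ++ [a]) with hc₀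
    cases fr with
    | nil =>
      have h0 : List.replicate k c ++ List.replicate k' v = [] := by
        rw [← hrest]; rfl
      rw [List.append_eq_nil_iff] at h0
      have hk0 : k = 0 := by simpa using congrArg List.length h0.1
      have hk'0 : k' = 0 := by simpa using congrArg List.length h0.2
      subst hk0; subst hk'0
      exact ⟨1, 0, c₀, by simp⟩
    | cons a₂ fr' =>
      -- boundary analysis
      have hbnd := ordseq_boundary hxy a a₂ fr' bk (by simpa using nd)
        (by simpa using hx) (by simpa using hy)
      have hhead : ((ordseq (a₂ :: fr') (bk ++ [a])).map (obw x y)).head?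
          = some (obw x y (fr'.reverse ++ (bk ++ [a]) ++ [a₂])) := by
        rw [ordseq_cons]
        simp
      have hob2 : obw x y (fr'.reverse ++ (bk ++ [a]) ++ [a₂]) = c₀ ∨
          obw x y (fr'.reverse ++ (bk ++ [a]) ++ [a₂]) = v := by
        rcases hbnd with h | h
        · left
          rw [hc₀, obw, obw, h]
        · right
          rw [hv, obw, obw, h]
      -- combine
      rcases Nat.eq_zero_or_pos k with rfl | hk
    -- k = 0
      · rw [List.replicate_zero, List.nil_append] at hrest ⊢
        by_cases hc0v : c₀ = v
        · exact ⟨0, k' + 1, c, by rw [List.replicate_succ, ← hc0v]; simp⟩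
        · exact ⟨1, k', c₀, by simp⟩
      · obtain ⟨k'', rfl⟩ : ∃ k'', k = k'' + 1 := ⟨k - 1, by omega⟩
        have hc : c = obw x y (fr'.reverse ++ (bk ++ [a]) ++ [a₂]) := by
          have h1 : ((ordseq (a₂ :: fr') (bk ++ [a])).map (obw x y)).head?
              = some c := by
            rw [hrest, List.replicate_succ]
            simp
          rw [h1] at hhead
          exact (Option.some_inj.1 hhead)
        rcases hob2 with h | h
        · refine ⟨k'' + 2, k', c₀, ?_⟩
          rw [hc, h]
          simp [List.replicate_succ]
        · have hcv : c = v := by rw [hc, h]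
          rw [hcv, ← List.replicate_add]
          by_cases hc0v : c₀ = v
          · refine ⟨0, k'' + 1 + k' + 1, v, ?_⟩
            rw [hc0v]
            simp [List.replicate_succ]
          · refine ⟨1, k'' + 1 + k', c₀, ?_⟩
            simp [List.replicate_succ]

theorem flips_ordseq_le_one {x y : V} (hxy : x ≠ y) (fr bk : List V)
    (nd : (fr ++ bk).Nodup) (hx : x ∈ fr ++ bk) (hy : y ∈ fr ++ bk) :
    flips ((ordseq fr bk).map (obw x y)) ≤ 1 := by
  obtain ⟨k, k', c, h⟩ := ordseq_good hxy fr bk nd hx hy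
  rw [h]
  exact flips_two_const (fun b hb => List.eq_of_mem_replicate hb)
    (fun b hb => List.eq_of_mem_replicate hb)

theorem blocksAux_restrict_adjacent {LB : List V} {w : V → V → Bool} {x y : V}
    (hyLB : y ∈ LB) (hxLB : x ∉ LB) (ndLB : LB.Nodup) (hw : w x y = false) :
    ∀ (fr bk : List V), (fr ++ bk).Nodup → x ∈ fr ++ bk →
      (∀ z ∈ fr ++ bk, z ∉ LB) →
      ∀ p ∈ blocksAux LB w fr bk, restrictWord p x y = [x, y]
  | [], bk, _, _, _, p, hp => by rw [blocksAux_nil] at hp; exact absurd hp (by simp)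
  | a :: fr, bk, nd, hx, hall, p, hp => by
    have hrLB : restrictWord LB x y = [y] := restrict_single' ndLB hyLB hxLB
    rw [List.cons_append, List.nodup_cons] at nd
    obtain ⟨hna, nd0⟩ := nd
    have haLB : a ∉ LB := hall a (by simp)
    have hay : a ≠ y := fun h => haLB (h ▸ hyLB)
    have hndpb : (fr.reverse ++ bk).Nodup :=
      (((List.reverse_perm fr).append_right bk).symm.nodup nd0)
    have hmempb : ∀ z, z ∈ fr.reverse ++ bk ↔ z ∈ fr ++ bk := by
      intro z
      simp
    have hy_npb : y ∉ fr.reverse ++ bk := by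
      rw [hmempb]
      intro h
      exact hall y (by simp [h]) hyLB
    have hbp : basePerm fr.reverse bk a LB = (fr.reverse ++ bk) ++ (a :: LB) := by
      simp [basePerm]
    rw [blocksAux_cons] at hp
    rcases List.mem_append.1 hp with hp | hp
    · rcases mem_blockOf hp with rfl | ⟨b, hb, hwb, rfl⟩
      · -- base perm
        by_cases hxa : x = a
        · subst hxa
          have h1 : restrictWord (fr.reverse ++ bk) x y = [] := restrict_eq_nil (by
            intro z hz
            constructor
            · rintro rfl
              exact hna ((hmempb z).1 hz)
            · rintro rfl
              exact hy_npb hz)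
          rw [hbp, restrict_append, h1]
          simp [restrict_cons', hrLB]
        · have hxpb : x ∈ fr.reverse ++ bk := by
            rw [hmempb]
            rcases List.mem_append.1 hx with h | h
            · rcases List.mem_cons.1 h with h | h
              · exact absurd h hxa
              · simp [h]
            · simp [h]
          have h1 : restrictWord (fr.reverse ++ bk) x y = [x] :=
            restrict_single hndpb hxpb hy_npb
          rw [hbp, restrict_append, h1]
          simp [restrict_cons', hrLB, Ne.symm hxa, hay]
      · -- wiggle perm
        have hwp : wigPerm fr.reverse bk a b LB
            = (fr.reverse ++ bk) ++ (b :: a :: LB.erase b) := by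
          simp [wigPerm]
        by_cases hby : b = y
        · subst hby
          have hbx : b ≠ x := fun h => hxLB (h ▸ hb)
          have hxa : ¬ x = a := by
            rintro rfl
            rw [hwb] at hw
            simp at hw
          have hxpb : x ∈ fr.reverse ++ bk := by
            rw [hmempb]
            rcases List.mem_append.1 hx with h | h
            · rcases List.mem_cons.1 h with h | h
              · exact absurd h hxa
              · simp [h]
            · simp [h]
          have h1 : restrictWord (fr.reverse ++ bk) x b = [x] :=
            restrict_single hndpb hxpb hy_npb
          have h2 : restrictWord (LB.erase b) x b = [] := restrict_eq_nil (by
            intro z hz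
            constructor
            · rintro rfl
              exact hxLB (List.mem_of_mem_erase hz)
            · rintro rfl
              exact ndLB.not_mem_erase hz)
          rw [hwp, restrict_append, h1]
          simp [restrict_cons', h2, hbx, Ne.symm hxa, hay]
        · have hbx : b ≠ x := fun h => hxLB (h ▸ hb)
          have hby' : b ≠ y := hby
          have h2 : restrictWord (LB.erase b) x y = [y] :=
            restrict_single' (ndLB.erase b)
              ((List.mem_erase_of_ne (fun h => hby (h.symm))).2 hyLB)
              (fun h => hxLB (List.mem_of_mem_erase h))
          by_cases hxa : x = a
          · subst hxa
            have h1 : restrictWord (fr.reverse ++ bk) x y = [] := restrict_eq_nil (by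
              intro z hz
              constructor
              · rintro rfl
                exact hna ((hmempb z).1 hz)
              · rintro rfl
                exact hy_npb hz)
            rw [hwp, restrict_append, h1]
            simp [restrict_cons', h2, hbx, hby']
          · have hxpb : x ∈ fr.reverse ++ bk := by
              rw [hmempb]
              rcases List.mem_append.1 hx with h | h
              · rcases List.mem_cons.1 h with h | h
                · exact absurd h hxa
                · simp [h]
              · simp [h]
            have h1 : restrictWord (fr.reverse ++ bk) x y = [x] :=
              restrict_single hndpb hxpb hy_npb
            rw [hwp, restrict_append, h1]
            simp [restrict_cons', h2, hbx, hby', Ne.symm hxa, hay]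
    · -- recursive case
      have ndperm : (a :: (fr ++ bk)).Perm (fr ++ (bk ++ [a])) := by
        calc a :: (fr ++ bk)
            ~ fr ++ (a :: bk) := List.perm_middle.symm
          _ ~ fr ++ (bk ++ [a]) := List.Perm.append_left fr (List.perm_append_singleton a bk).symm
      have nd' : (fr ++ (bk ++ [a])).Nodup := ndperm.nodup (List.nodup_cons.2 ⟨hna, nd0⟩)
      have hx' : x ∈ fr ++ (bk ++ [a]) := ndperm.mem_iff.1 (by simpa using hx)
      have hall' : ∀ z ∈ fr ++ (bk ++ [a]), z ∉ LB := by
        intro z hz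
        have : z ∈ a :: (fr ++ bk) := ndperm.mem_iff.2 hz
        exact hall z (by simpa using this)
      exact blocksAux_restrict_adjacent hyLB hxLB ndLB hw fr (bk ++ [a]) nd' hx' hall' p hp

end Stmt6
end Stmt6Aux

open Stmt6

/-- if the vertex set of a finite graph `G` can be partitioned into a set `A`
inducing a comparability graph (there is a strict partial order on `A` such that two
distinct vertices of `A` are adjacent iff they are comparable) and an independent set `B`,
then `G` is permutationally 1-11-representable. -/
theorem stmt6 {V : Type*} [Fintype V] [DecidableEq V] (G : SimpleGraph V)
    (A B : Set V) (hcover : A ∪ B = Set.univ) (hdisj : Disjoint A B)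
    (hcomp : ∃ lt : V → V → Prop,
      (∀ a ∈ A, ∀ b ∈ A, ∀ c ∈ A, lt a b → lt b c → lt a c) ∧
      (∀ a ∈ A, ¬ lt a a) ∧
      (∀ a ∈ A, ∀ b ∈ A, a ≠ b → (G.Adj a b ↔ (lt a b ∨ lt b a))))
    (hindep : ∀ x ∈ B, ∀ y ∈ B, ¬ G.Adj x y) :
    PermRepresentable 1 G := by
  classical
  obtain ⟨lt, htrans, hirr, hiff⟩ := hcomp
  -- basic set facts
  have hcov : ∀ z : V, z ∈ A ∨ z ∈ B := by
    intro z
    have : z ∈ A ∪ B := by rw [hcover]; trivial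
    exact this
  have hAB : ∀ z : V, z ∈ A → z ∈ B → False := fun z hA hB =>
    Set.disjoint_left.1 hdisj hA hB
  -- the base partial order
  set le0 : V → V → Prop := fun z w => z = w ∨ (z ∈ A ∧ w ∈ A ∧ lt z w) with hle0
  have le0_trans : ∀ z w u, le0 z w → le0 w u → le0 z u := by
    intro z w u hzw hwu
    rcases hzw with rfl | ⟨hz, hw, h1⟩
    · exact hwu
    · rcases hwu with rfl | ⟨hw', hu, h2⟩
      · exact Or.inr ⟨hz, hw, h1⟩
      · exact Or.inr ⟨hz, hu, htrans z hz w hw' u hu h1 h2⟩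
  have le0_antisymm : ∀ z w, le0 z w → le0 w z → z = w := by
    intro z w hzw hwz
    rcases hzw with rfl | ⟨hz, hw, h1⟩
    · rfl
    · rcases hwz with rfl | ⟨hw', hz', h2⟩
      · rfl
      · exact absurd (htrans z hz w hw z hz h1 h2) (hirr z hz)
  have le0_po : IsPartialOrder V le0 :=
    { refl := fun z => Or.inl rfl
      trans := le0_trans
      antisymm := le0_antisymm }
  haveI := le0_po
  obtain ⟨s₀, hs₀lin, hs₀le⟩ := extend_partialOrder le0
  -- sorted enumerations of A
  have sortEx : ∀ (s : V → V → Prop), IsLinearOrder V s →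
      ∃ l : List V, l.Nodup ∧ (∀ z, z ∈ l ↔ z ∈ A) ∧ l.Pairwise s := by
    intro s hs
    haveI := hs
    haveI : DecidableRel s := Classical.decRel s
    refine ⟨(Finset.univ.filter (fun z => z ∈ A)).sort s, Finset.sort_nodup _ _, ?_,
      Finset.pairwise_sort _ s⟩
    intro z
    simp [Finset.mem_sort]
  obtain ⟨LA, hLAnd, hLAmem, hLApw⟩ := sortEx s₀ hs₀lin
  have hs₀anti : ∀ a b, s₀ a b → s₀ b a → a = b := fun a b h1 h2 =>
    hs₀lin.toIsPartialOrder.toAntisymm.antisymm a b h1 h2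
  -- enumeration of B
  set LB : List V := (Finset.univ.filter (fun z => z ∈ B)).toList with hLBdef
  have hLBnd : LB.Nodup := Finset.nodup_toList _
  have hLBmem : ∀ z, z ∈ LB ↔ z ∈ B := by
    intro z
    simp [hLBdef, Finset.mem_toList]
  have hLALB : ∀ z, z ∈ LA → z ∉ LB := fun z h1 h2 =>
    hAB z ((hLAmem z).1 h1) ((hLBmem z).1 h2)
  -- the per-pair linear extensions
  set Cp : V × V → Prop := fun p =>
    p.1 ∈ A ∧ p.2 ∈ A ∧ p.1 ≠ p.2 ∧ ¬ lt p.1 p.2 ∧ ¬ lt p.2 p.1 with hCp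
  have claim_ex : ∀ p : V × V, ∃ l : List V, l.Nodup ∧ (∀ z, z ∈ l ↔ z ∈ A) ∧
      (∀ u v, u ∈ A → v ∈ A → lt u v → restrictWord l u v = [u, v]) ∧
      (Cp p → restrictWord l p.1 p.2 = [p.2, p.1]) := by
    intro p
    by_cases hC : Cp p
    · obtain ⟨hp1, hp2, hpne, hnlt1, hnlt2⟩ := hC
      have hnle : ¬ le0 p.1 p.2 := by
        rintro (h | ⟨_, _, h⟩)
        · exact hpne h
        · exact hnlt1 h
      set q : V → V → Prop := fun z w => le0 z w ∨ (le0 z p.2 ∧ le0 p.1 w) with hq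
      have q_po : IsPartialOrder V q :=
        { refl := fun z => Or.inl (Or.inl rfl)
          trans := by
            rintro z w u (hzw | ⟨h1, h2⟩) (hwu | ⟨h3, h4⟩)
            · exact Or.inl (le0_trans z w u hzw hwu)
            · exact Or.inr ⟨le0_trans z w p.2 hzw h3, h4⟩
            · exact Or.inr ⟨h1, le0_trans p.1 w u h2 hwu⟩
            · exact absurd (le0_trans p.1 w p.2 h2 h3) hnle
          antisymm := by
            rintro z w (hzw | ⟨h1, h2⟩) (hwz | ⟨h3, h4⟩)
            · exact le0_antisymm z w hzw hwz
            · exact absurd (le0_trans p.1 z p.2 h4 (le0_trans z w p.2 hzw h3)) hnle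
            · exact absurd (le0_trans p.1 w p.2 h2 (le0_trans w z p.2 hwz h1)) hnle
            · exact absurd (le0_trans p.1 z p.2 h4 h1) hnle }
      haveI := q_po
      obtain ⟨s, hslin, hsle⟩ := extend_partialOrder q
      obtain ⟨l, hlnd, hlmem, hlpw⟩ := sortEx s hslin
      have hsanti : ∀ a b, s a b → s b a → a = b := fun a b h1 h2 =>
        hslin.toIsPartialOrder.toAntisymm.antisymm a b h1 h2
      refine ⟨l, hlnd, hlmem, ?_, ?_⟩
      · intro u v hu hv hluv
        have huvne : u ≠ v := by
          rintro rfl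
          exact hirr u hu hluv
        refine restrict_sorted hsanti hlpw hlnd ((hlmem u).2 hu) ((hlmem v).2 hv) huvne ?_
        exact hsle _ _ (Or.inl (Or.inr ⟨hu, hv, hluv⟩))
      · intro _
        have hs21 : s p.2 p.1 := hsle _ _ (Or.inr ⟨Or.inl rfl, Or.inl rfl⟩)
        rw [restrict_comm]
        exact restrict_sorted hsanti hlpw hlnd ((hlmem p.2).2 hp2) ((hlmem p.1).2 hp1)
          (Ne.symm hpne) hs21
    · refine ⟨LA, hLAnd, hLAmem, ?_, fun h => absurd h hC⟩
      intro u v hu hv hluv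
      have huvne : u ≠ v := by
        rintro rfl
        exact hirr u hu hluv
      refine restrict_sorted hs₀anti hLApw hLAnd ((hLAmem u).2 hu) ((hLAmem v).2 hv) huvne ?_
      exact hs₀le _ _ (Or.inr ⟨hu, hv, hluv⟩)
  choose fM hfM1 hfM2 hfM3 hfM4 using claim_ex
  -- word pieces
  set base : List V := LA ++ LB with hbase
  set pl : List (V × V) := (Finset.univ : Finset (V × V)).toList with hpl
  set f1 : V × V → List (List V) := fun p => [fM p ++ LB, base] with hf1
  set part1 : List (List V) := base :: pl.flatMap f1 with hpart1
  set w : V → V → Bool := fun a b => decide (¬ G.Adj a b) with hwdef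
  set QA : List V := LA.reverse with hQA
  set part2 : List (List V) := blocksAux LB w QA [] with hpart2
  set Q : List V := QA ++ LB with hQ
  set f3 : V → List (List V) := fun b => [QA ++ b :: LB.erase b, Q] with hf3
  set part3 : List (List V) := LB.flatMap f3 with hpart3
  set PS : List (List V) := part1 ++ part2 ++ part3 with hPS
  -- basic permutation-word facts
  have hbasend : base.Nodup := by
    rw [hbase]
    exact List.nodup_append.2 ⟨hLAnd, hLBnd, fun z hz w hw heq => hLALB z hz (heq ▸ hw)⟩
  have hbasemem : ∀ z : V, z ∈ base := by
    intro z
    rw [hbase, List.mem_append]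
    rcases hcov z with h | h
    · exact Or.inl ((hLAmem z).2 h)
    · exact Or.inr ((hLBmem z).2 h)
  have hApart : ∀ (l : List V), l.Nodup → (∀ z, z ∈ l ↔ z ∈ A) →
      (l ++ LB).Nodup ∧ (∀ z, z ∈ l ++ LB) := by
    intro l hnd hmem
    constructor
    · exact List.nodup_append.2 ⟨hnd, hLBnd,
        fun z hz w hw heq => hAB z ((hmem z).1 hz) ((hLBmem z).1 (heq ▸ hw))⟩
    · intro z
      rw [List.mem_append]
      rcases hcov z with h | h
      · exact Or.inl ((hmem z).2 h)
      · exact Or.inr ((hLBmem z).2 h)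
  have hQAmem : ∀ z, z ∈ QA ↔ z ∈ A := by
    intro z
    rw [hQA, List.mem_reverse]
    exact hLAmem z
  have hQAnd : QA.Nodup := by
    rw [hQA]
    exact List.nodup_reverse.2 hLAnd
  have hQnd : Q.Nodup := (hApart QA hQAnd hQAmem).1
  have hQmem : ∀ z, z ∈ Q := (hApart QA hQAnd hQAmem).2
  have hperm : ∀ p ∈ PS, IsPermWord p := by
    intro p hp
    rw [hPS] at hp
    rcases List.mem_append.1 hp with hp | hp3
    · rcases List.mem_append.1 hp with hp1 | hp2
      · -- part1
        rw [hpart1] at hp1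
        rcases List.mem_cons.1 hp1 with rfl | hp1
        · exact ⟨hbasend, hbasemem⟩
        · obtain ⟨q, _, hpq⟩ := List.mem_flatMap.1 hp1
          rw [hf1] at hpq
          simp only [List.mem_cons, List.mem_singleton] at hpq
          rcases hpq with rfl | rfl | h
          · exact ⟨(hApart (fM q) (hfM1 q) (hfM2 q)).1, (hApart (fM q) (hfM1 q) (hfM2 q)).2⟩
          · exact ⟨hbasend, hbasemem⟩
          · exact absurd h (by simp)
      · -- part2
        rw [hpart2] at hp2
        have hpp := blocksAux_mem_perm LB w LA.reverse [] p hp2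
        have heq : LA.reverse ++ [] ++ LB = QA ++ LB := by simp [hQA]
        rw [heq] at hpp
        constructor
        · exact (hpp.nodup_iff).2 hQnd
        · intro z
          exact hpp.mem_iff.2 (hQmem z)
    · -- part3
      rw [hpart3] at hp3
      obtain ⟨b, hb, hpb⟩ := List.mem_flatMap.1 hp3
      rw [hf3] at hpb
      simp only [List.mem_cons, List.mem_singleton] at hpb
      have hwigperm : (QA ++ b :: LB.erase b).Perm Q := by
        rw [hQ]
        exact List.Perm.append_left QA (List.perm_cons_erase hb).symm
      rcases hpb with rfl | rfl | h
      · exact ⟨hwigperm.nodup_iff.2 hQnd, fun z => hwigperm.mem_iff.2 (hQmem z)⟩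
      · exact ⟨hQnd, hQmem⟩
      · exact absurd h (by simp)
  -- master counting identity
  have hkey : ∀ u v : V, u ≠ v →
      pattern11Count (restrictWord PS.flatten u v) = flips (PS.map (obw u v)) := by
    intro u v huv
    apply count_eq_flips huv
    intro p hp
    obtain ⟨hnd, hmem⟩ := hperm p hp
    exact restrict_pair hnd (hmem u) (hmem v) huv
  -- frequently used restriction facts
  have hrLBnilA : ∀ u v : V, u ∈ A → v ∈ A → restrictWord LB u v = [] := by
    intro u v hu hv
    apply restrict_eq_nil
    intro z hz
    have hzB := (hLBmem z).1 hz
    exact ⟨fun h => hAB u hu (h ▸ hzB), fun h => hAB v hv (h ▸ hzB)⟩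
  have hrLAnilB : ∀ (l : List V), (∀ z, z ∈ l ↔ z ∈ A) →
      ∀ u v : V, u ∈ B → v ∈ B → restrictWord l u v = [] := by
    intro l hlmem u v hu hv
    apply restrict_eq_nil
    intro z hz
    have hzA := (hlmem z).1 hz
    exact ⟨fun h => hAB u (h ▸ hzA) hu, fun h => hAB v (h ▸ hzA) hv⟩
  have hsortedLA : ∀ u v : V, u ∈ A → v ∈ A → lt u v → restrictWord LA u v = [u, v] := by
    intro u v hu hv hlt
    have huv : u ≠ v := fun h => hirr u hu (h ▸ hlt)
    exact restrict_sorted hs₀anti hLApw hLAnd ((hLAmem u).2 hu) ((hLAmem v).2 hv) huv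
      (hs₀le _ _ (Or.inr ⟨hu, hv, hlt⟩))
  have hndrev : (QA ++ ([] : List V)).Nodup := by
    rw [List.append_nil]
    exact hQAnd
  -- KEY 1 : adjacency gives at most one 11-pattern
  have keyAA : ∀ u v : V, u ∈ A → v ∈ A → lt u v →
      flips (PS.map (obw u v)) ≤ 1 := by
    intro u v hu hv hlt
    have huv : u ≠ v := fun h => hirr u hu (h ▸ hlt)
    have hunLB : u ∉ LB := fun h => hAB u hu ((hLBmem u).1 h)
    have hvnLB : v ∉ LB := fun h => hAB v hv ((hLBmem v).1 h)
    have hsLA : restrictWord LA u v = [u, v] := hsortedLA u v hu hv hlt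
    have hrLB : restrictWord LB u v = [] := hrLBnilA u v hu hv
    have hbase_val : restrictWord base u v = [u, v] := by
      rw [hbase, restrict_append, hsLA, hrLB, List.append_nil]
    obtain ⟨a₀, fr₀, hrev⟩ : ∃ a l, QA = a :: l := by
      cases h : QA with
      | nil =>
        exfalso
        have : LA = [] := by
          have := congrArg List.reverse h
          simpa [hQA] using this
        exact (by simp [this] : u ∉ LA) ((hLAmem u).2 hu)
      | cons a l => exact ⟨a, l, rfl⟩
    have hLAeq : fr₀.reverse ++ [a₀] = LA := by
      have h1 := congrArg List.reverse hrev
      rw [hQA] at h1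
      simp only [List.reverse_reverse, List.reverse_cons] at h1
      exact h1.symm
    have hpart1const : ∀ b ∈ part1.map (obw u v), b = true := by
      intro b hb
      obtain ⟨p, hp, rfl⟩ := List.mem_map.1 hb
      rw [hpart1] at hp
      have hval : restrictWord p u v = [u, v] := by
        rcases List.mem_cons.1 hp with rfl | hp
        · exact hbase_val
        · obtain ⟨q, _, hpq⟩ := List.mem_flatMap.1 hp
          rw [hf1] at hpq
          simp only [List.mem_cons, List.mem_singleton] at hpq
          rcases hpq with rfl | rfl | h
          · rw [restrict_append, hfM3 q u v hu hv hlt, hrLB, List.append_nil]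
          · exact hbase_val
          · exact absurd h (by simp)
      simp [obw, hval]
    have hrQ : restrictWord Q u v = restrictWord QA u v := by
      rw [hQ, restrict_append, hrLB, List.append_nil]
    have hpart3const : ∀ b ∈ part3.map (obw u v), b = obw u v Q := by
      intro b hb
      obtain ⟨p, hp, rfl⟩ := List.mem_map.1 hb
      rw [hpart3] at hp
      obtain ⟨b', hb', hpb⟩ := List.mem_flatMap.1 hp
      rw [hf3] at hpb
      simp only [List.mem_cons, List.mem_singleton] at hpb
      have hb'u : b' ≠ u := fun h => hunLB (h ▸ hb')
      have hb'v : b' ≠ v := fun h => hvnLB (h ▸ hb')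
      rcases hpb with rfl | rfl | h
      · have : restrictWord (QA ++ b' :: LB.erase b') u v = restrictWord QA u v := by
          rw [restrict_append, restrict_cons b' (LB.erase b') u v,
            restrict_singleton_ne hb'u hb'v,
            restrict_sublist_nil (List.erase_sublist (a := b') (l := LB)) hrLB]
          simp
        simp [obw, this, hrQ]
      · rfl
      · exact absurd h (by simp)
    have hshape : PS = part1 ++ (part2 ++ part3) := by rw [hPS, List.append_assoc]
    rw [hshape, List.map_append, List.map_append]
    have hhead : ((part2.map (obw u v)) ++ (part3.map (obw u v))).head? = some true := by
      rw [hpart2, hrev, blocksAux_cons]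
      have hbval : obw u v (basePerm fr₀.reverse [] a₀ LB) = true := by
        have h1 : restrictWord (basePerm fr₀.reverse [] a₀ LB) u v
            = restrictWord (fr₀.reverse ++ [] ++ [a₀]) u v :=
          basePerm_restrict hunLB hvnLB
        have h2 : fr₀.reverse ++ [] ++ [a₀] = LA := by
          rw [List.append_nil]
          exact hLAeq
        rw [h2] at h1
        simp [obw, h1, hsLA]
      rw [blockOf]
      simp [hbval]
    rw [flips_const_prepend hpart1const hhead]
    have hlast : (part2.map (obw u v)).getLast? = some (obw u v Q) := by
      rw [List.getLast?_map, hpart2, blocksAux_getLast LB w QA [] (by rw [hrev]; simp)]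
      have : ([] : List V) ++ QA ++ LB = Q := by simp [hQ]
      rw [this]
      rfl
    rw [flips_append_const_right hpart3const hlast]
    rw [hpart2, flips_blocksAux_eq hunLB hvnLB]
    exact flips_ordseq_le_one huv QA [] hndrev
      (by simp [(hQAmem u).2 hu]) (by simp [(hQAmem v).2 hv])
  have keyAB : ∀ u v : V, u ∈ A → v ∈ B → G.Adj u v →
      flips (PS.map (obw u v)) ≤ 1 := by
    intro u v hu hv hadj
    have huv : u ≠ v := fun h => hAB u hu (h ▸ hv)
    have hunLB : u ∉ LB := fun h => hAB u hu ((hLBmem u).1 h)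
    have hvLB : v ∈ LB := (hLBmem v).2 hv
    have hwuv : w u v = false := by simp [hwdef, hadj]
    have hApartval : ∀ (l : List V), l.Nodup → (∀ z, z ∈ l ↔ z ∈ A) →
        restrictWord (l ++ LB) u v = [u, v] := by
      intro l hnd hmem
      rw [restrict_append, restrict_single hnd ((hmem u).2 hu)
        (fun h => hAB v ((hmem v).1 h) hv), restrict_single' hLBnd hvLB hunLB]
      rfl
    have hallp : ∀ p ∈ PS, restrictWord p u v = [u, v] := by
      intro p hp
      rw [hPS] at hp
      rcases List.mem_append.1 hp with hp | hp3
      · rcases List.mem_append.1 hp with hp1 | hp2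
        · rw [hpart1] at hp1
          rcases List.mem_cons.1 hp1 with rfl | hp1
          · rw [hbase]
            exact hApartval LA hLAnd hLAmem
          · obtain ⟨q, _, hpq⟩ := List.mem_flatMap.1 hp1
            rw [hf1] at hpq
            simp only [List.mem_cons, List.mem_singleton] at hpq
            rcases hpq with rfl | rfl | h
            · exact hApartval (fM q) (hfM1 q) (hfM2 q)
            · rw [hbase]
              exact hApartval LA hLAnd hLAmem
            · exact absurd h (by simp)
        · rw [hpart2] at hp2
          refine blocksAux_restrict_adjacent hvLB hunLB hLBnd hwuv QA [] hndrev
            (by simp [(hQAmem u).2 hu]) ?_ p hp2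
          intro z hz h2
          have hzA : z ∈ A := by
            have : z ∈ QA := by simpa using hz
            exact (hQAmem z).1 this
          exact hAB z hzA ((hLBmem z).1 h2)
      · rw [hpart3] at hp3
        obtain ⟨b', hb', hpb⟩ := List.mem_flatMap.1 hp3
        rw [hf3] at hpb
        simp only [List.mem_cons, List.mem_singleton] at hpb
        have hQAval : restrictWord QA u v = [u] := restrict_single hQAnd
          ((hQAmem u).2 hu) (fun h => hAB v ((hQAmem v).1 h) hv)
        rcases hpb with rfl | rfl | h
        · by_cases hbv : b' = v
          · rw [restrict_append, hQAval, restrict_cons b' (LB.erase b') u v,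
              restrict_singleton_mem (Or.inr hbv)]
            have hnil : restrictWord (LB.erase b') u v = [] := restrict_eq_nil (by
              intro z hz
              constructor
              · rintro rfl
                exact hunLB (List.mem_of_mem_erase hz)
              · rintro rfl
                rw [hbv] at hz
                exact hLBnd.not_mem_erase hz)
            rw [hnil, hbv]
            rfl
          · have hbu : b' ≠ u := fun h => hunLB (h ▸ hb')
            rw [restrict_append, hQAval, restrict_cons b' (LB.erase b') u v,
              restrict_singleton_ne hbu hbv]
            have : restrictWord (LB.erase b') u v = [v] :=
              restrict_single' (hLBnd.erase b')
                ((List.mem_erase_of_ne (fun h => hbv h.symm)).2 hvLB)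
                (fun h => hunLB (List.mem_of_mem_erase h))
            rw [this]
            rfl
        · rw [hQ, restrict_append, hQAval, restrict_single' hLBnd hvLB hunLB]
          rfl
        · exact absurd h (by simp)
    have : ∀ b ∈ PS.map (obw u v), b = true := by
      intro b hb
      obtain ⟨p, hp, rfl⟩ := List.mem_map.1 hb
      simp [obw, hallp p hp]
    rw [flips_const this]
    omega
  -- KEY 2 : non-adjacency gives at least two 11-patterns
  have keyAAn : ∀ u v : V, u ∈ A → v ∈ A → u ≠ v → ¬ lt u v → ¬ lt v u →
      restrictWord LA u v = [u, v] → 2 ≤ flips (PS.map (obw u v)) := by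
    intro u v hu hv huv hn1 hn2 hLAval
    have hrLB : restrictWord LB u v = [] := hrLBnilA u v hu hv
    have hbase_val : restrictWord base u v = [u, v] := by
      rw [hbase, restrict_append, hLAval, hrLB, List.append_nil]
    have hCpuv : Cp (u, v) := ⟨hu, hv, huv, hn1, hn2⟩
    have hMval : restrictWord (fM (u, v) ++ LB) u v = [v, u] := by
      rw [restrict_append, hfM4 (u, v) hCpuv, hrLB, List.append_nil]
    have hmemp : (u, v) ∈ pl := by rw [hpl]; simp
    obtain ⟨m₁, m₂, hsplit⟩ := List.append_of_mem hmemp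
    have hshape : PS = (base :: m₁.flatMap f1)
        ++ ((fM (u, v) ++ LB) :: base :: (m₂.flatMap f1 ++ (part2 ++ part3))) := by
      rw [hPS, hpart1, hsplit, List.flatMap_append, List.flatMap_cons]
      have : f1 (u, v) = [fM (u, v) ++ LB, base] := by rw [hf1]
      rw [this]
      simp [List.append_assoc]
    rw [hshape, List.map_append, List.map_cons, List.map_cons]
    apply flips_ge_two (c := obw u v base) (d := obw u v (fM (u, v) ++ LB))
    · rw [← List.map_cons, List.getLast?_map]
      have hgl : (base :: m₁.flatMap f1).getLast? = some base := by
        have h : m₁.flatMap f1 = m₁.flatMap (fun p => [fM p ++ LB, base]) := by rw [hf1]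
        rw [h]
        exact getLast?_cons_flatMap base (fun p => fM p ++ LB) m₁
      rw [hgl]
      rfl
    · have h1 : obw u v base = true := by simp [obw, hbase_val]
      have h2 : obw u v (fM (u, v) ++ LB) = false := by
        simp only [obw, hMval]
        simp [huv]
      rw [h1, h2]
      simp
  have keyABn : ∀ u v : V, u ∈ A → v ∈ B → ¬ G.Adj u v →
      2 ≤ flips (PS.map (obw u v)) := by
    intro u v hu hv hnadj
    have huv : u ≠ v := fun h => hAB u hu (h ▸ hv)
    have hunLB : u ∉ LB := fun h => hAB u hu ((hLBmem u).1 h)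
    have hvLB : v ∈ LB := (hLBmem v).2 hv
    have hwuv : w u v = true := by simp [hwdef, hnadj]
    obtain ⟨pre, bk', X, Y, heq, hmempre⟩ := blocksAux_decomp LB w QA [] u
      (by simp [(hQAmem u).2 hu]) hndrev
    obtain ⟨Xb, Yb, heqb, hXb⟩ := blockOf_decomp pre bk' u (w u) hvLB hwuv
    have hprenil : restrictWord (pre ++ bk') u v = [] := restrict_eq_nil (by
      intro z hz
      obtain ⟨hz1, hz2⟩ := hmempre z hz
      have hzA : z ∈ A := by
        have : z ∈ QA := by simpa using hz1
        exact (hQAmem z).1 this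
      exact ⟨hz2, fun h => hAB z hzA (h ▸ hv)⟩)
    have hbaseP : restrictWord (basePerm pre bk' u LB) u v = [u, v] := by
      have : basePerm pre bk' u LB = (pre ++ bk') ++ (u :: LB) := by simp [basePerm]
      rw [this, restrict_append, hprenil, List.nil_append,
        restrict_cons u LB u v, restrict_singleton_mem (Or.inl rfl),
        restrict_single' hLBnd hvLB hunLB]
      rfl
    have hwigP : restrictWord (wigPerm pre bk' u v LB) u v = [v, u] := by
      have : wigPerm pre bk' u v LB = (pre ++ bk') ++ (v :: u :: LB.erase v) := by
        simp [wigPerm]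
      rw [this, restrict_append, hprenil, List.nil_append,
        restrict_cons v (u :: LB.erase v) u v, restrict_singleton_mem (Or.inr rfl),
        restrict_cons u (LB.erase v) u v, restrict_singleton_mem (Or.inl rfl)]
      have : restrictWord (LB.erase v) u v = [] := restrict_eq_nil (by
        intro z hz
        constructor
        · rintro rfl
          exact hunLB (List.mem_of_mem_erase hz)
        · rintro rfl
          exact hLBnd.not_mem_erase hz)
      rw [this]
      rfl
    have hshape : PS = (part1 ++ X ++ Xb)
        ++ (wigPerm pre bk' u v LB :: basePerm pre bk' u LB :: (Yb ++ (Y ++ part3))) := by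
      rw [hPS, hpart2, heq, heqb]
      simp [List.append_assoc]
    rw [hshape, List.map_append, List.map_cons, List.map_cons]
    apply flips_ge_two (c := obw u v (basePerm pre bk' u LB))
      (d := obw u v (wigPerm pre bk' u v LB))
    · rw [List.getLast?_map]
      have : (part1 ++ X ++ Xb).getLast? = some (basePerm pre bk' u LB) := by
        rw [List.getLast?_append, hXb]
        rfl
      rw [this]
      rfl
    · have h1 : obw u v (basePerm pre bk' u LB) = true := by simp [obw, hbaseP]
      have h2 : obw u v (wigPerm pre bk' u v LB) = false := by
        simp only [obw, hwigP]
        simp [huv]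
      rw [h1, h2]
      simp
  have keyBBn : ∀ u v : V, u ∈ B → v ∈ B → u ≠ v → restrictWord LB u v = [u, v] →
      2 ≤ flips (PS.map (obw u v)) := by
    intro u v hu hv huv hLBval
    have hvLB : v ∈ LB := (hLBmem v).2 hv
    have huLB : u ∈ LB := (hLBmem u).2 hu
    have hQAnil : restrictWord QA u v = [] := hrLAnilB QA hQAmem u v hu hv
    have hQval : restrictWord Q u v = [u, v] := by
      rw [hQ, restrict_append, hQAnil, hLBval]
      rfl
    have hbaseval : restrictWord base u v = [u, v] := by
      rw [hbase, restrict_append, hrLAnilB LA hLAmem u v hu hv, hLBval]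
      rfl
    have hWval : restrictWord (QA ++ v :: LB.erase v) u v = [v, u] := by
      rw [restrict_append, hQAnil, List.nil_append, restrict_cons v (LB.erase v) u v,
        restrict_singleton_mem (Or.inr rfl)]
      have : restrictWord (LB.erase v) u v = [u] :=
        restrict_single (hLBnd.erase v) ((List.mem_erase_of_ne huv).2 huLB)
          (hLBnd.not_mem_erase)
      rw [this]
      rfl
    obtain ⟨m₁, m₂, hsplit⟩ := List.append_of_mem hvLB
    have hf3v : f3 v = [QA ++ v :: LB.erase v, Q] := by rw [hf3]
    have hshape : PS = (part1 ++ part2 ++ m₁.flatMap f3)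
        ++ ((QA ++ v :: LB.erase v) :: Q :: m₂.flatMap f3) := by
      rw [hPS, hpart3]
      conv_lhs => rw [hsplit]
      rw [List.flatMap_append, List.flatMap_cons, hf3v]
      simp [List.append_assoc]
    rw [hshape, List.map_append, List.map_cons, List.map_cons,
      show obw u v Q = true by simp [obw, hQval]]
    have hUlast : ∃ g, (part1 ++ part2 ++ m₁.flatMap f3).getLast? = some g
        ∧ obw u v g = true := by
      cases hm₁ : m₁ with
      | cons b mm =>
        refine ⟨Q, ?_, by simp [obw, hQval]⟩
        rw [List.getLast?_append]
        have h : (b :: mm).flatMap f3 = (b :: mm).flatMap (fun b => [QA ++ b :: LB.erase b, Q]) := by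
          rw [hf3]
        rw [h, getLast?_flatMap_ne Q (fun b => QA ++ b :: LB.erase b) (b :: mm) (by simp)]
        rfl
      | nil =>
        rw [List.flatMap_nil, List.append_nil]
        cases hrev : QA with
        | nil =>
          have hp2nil : part2 = [] := by rw [hpart2, hrev, blocksAux_nil]
          refine ⟨base, ?_, by simp [obw, hbaseval]⟩
          rw [hp2nil, List.append_nil, hpart1]
          have : pl.flatMap f1 = pl.flatMap (fun p => [fM p ++ LB, base]) := by rw [hf1]
          rw [this]
          exact getLast?_cons_flatMap base (fun p => fM p ++ LB) pl
        | cons a l =>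
          refine ⟨Q, ?_, by simp [obw, hQval]⟩
          rw [List.getLast?_append, hpart2,
            blocksAux_getLast LB w QA [] (by rw [hrev]; simp)]
          have : ([] : List V) ++ QA ++ LB = Q := by simp [hQ]
          rw [this]
          rfl
    obtain ⟨g, hg1, hg2⟩ := hUlast
    apply flips_ge_two (c := true) (d := obw u v (QA ++ v :: LB.erase v))
    · rw [List.getLast?_map, hg1]
      simp [hg2]
    · have h2 : obw u v (QA ++ v :: LB.erase v) = false := by
        simp only [obw, hWval]
        simp [huv]
      rw [h2]
      simp
  -- assemble
  refine ⟨PS, hperm, ?_, ?_⟩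
  · intro z
    refine List.mem_flatten.2 ⟨base, ?_, hbasemem z⟩
    rw [hPS, hpart1]
    simp
  · intro x y hxy
    have hcnt := hkey x y hxy
    have hcnt' := hkey y x (Ne.symm hxy)
    have hflip : restrictWord PS.flatten x y = restrictWord PS.flatten y x :=
      restrict_comm _ x y
    constructor
    · intro hadj
      rcases hcov x with hx | hx
      · rcases hcov y with hy | hy
        · rcases (hiff x hx y hy hxy).1 hadj with hlt | hlt
          · rw [hcnt]
            exact keyAA x y hx hy hlt
          · rw [hflip, hcnt']
            exact keyAA y x hy hx hlt
        · rw [hcnt]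
          exact keyAB x y hx hy hadj
      · rcases hcov y with hy | hy
        · rw [hflip, hcnt']
          exact keyAB y x hy hx hadj.symm
        · exact absurd hadj (hindep x hx y hy)
    · intro hle
      by_contra hnadj
      have h2 : 2 ≤ pattern11Count (restrictWord PS.flatten x y) := by
        rcases hcov x with hx | hx
        · rcases hcov y with hy | hy
          · have hn1 : ¬ lt x y := fun h => hnadj ((hiff x hx y hy hxy).2 (Or.inl h))
            have hn2 : ¬ lt y x := fun h => hnadj ((hiff x hx y hy hxy).2 (Or.inr h))
            rcases restrict_pair hLAnd ((hLAmem x).2 hx) ((hLAmem y).2 hy) hxy with hor | hor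
            · rw [hcnt]
              exact keyAAn x y hx hy hxy hn1 hn2 hor
            · rw [hflip, hcnt']
              refine keyAAn y x hy hx (Ne.symm hxy) hn2 hn1 ?_
              rw [restrict_comm]
              exact hor
          · rw [hcnt]
            exact keyABn x y hx hy hnadj
        · rcases hcov y with hy | hy
          · rw [hflip, hcnt']
            exact keyABn y x hy hx (fun h => hnadj h.symm)
          · rcases restrict_pair hLBnd ((hLBmem x).2 hx) ((hLBmem y).2 hy) hxy with hor | hor
            · rw [hcnt]
              exact keyBBn x y hx hy hxy hor
            · rw [hflip, hcnt']
              refine keyBBn y x hy hx (Ne.symm hxy) ?_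
              rw [restrict_comm]
              exact hor
      omega
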